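/- For a prime p ≥ 5, every undirected Hamiltonian cycle on Z/p that is invariant under a nontrivial rotation k ↦ k + r (mod p) is a star polygon, i.e., equal to the cycle visiting 0, d, 2d, ..., (p-1)d mod p for some d with 1 ≤ d ≤ (p-1)/2. -/

import Mathlib

open Equiv
set_option linter.unusedSectionVars false

variable (p : ℕ) [NeZero p]

/-- `σ` is a (directed) Hamiltonian cycle on the `p` vertices `ZMod p`:
a single cycle whose support is everything. -/
def IsHC (σ : Perm (ZMod p)) : Prop := σ.IsCycle ∧ σ.support = Finset.univ

/-- The type of directed Hamiltonian cycles on `ZMod p`. -/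
def HC := {σ : Perm (ZMod p) // IsHC p σ}

/-- Rotation `k ↦ r + k`. -/
def rot (r : ZMod p) : Perm (ZMod p) := Equiv.addLeft r

/-- Reflection `k ↦ s - k`. -/
def reflAt (s : ZMod p) : Perm (ZMod p) := Equiv.subLeft s

/-- `g` fixes the *undirected* cycle underlying `σ` (conjugation can reverse orientation). -/
def FixedBy (g σ : Perm (ZMod p)) : Prop := g * σ * g⁻¹ = σ ∨ g * σ * g⁻¹ = σ⁻¹

lemma rot_zero : rot p 0 = 1 := by ext x; simp [rot]

lemma rot_neg (r : ZMod p) : rot p (-r) = (rot p r)⁻¹ := by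
  ext x; simp [rot, neg_add_eq_sub, eq_sub_iff_add_eq]

lemma rot_add (r s : ZMod p) : rot p (r + s) = rot p r * rot p s := by
  ext x; simp [rot, add_assoc]

/-- The action of a rotation on a cycle, by conjugation. -/
def rotAct (r : ZMod p) (σ : Perm (ZMod p)) : Perm (ZMod p) := rot p r * σ * (rot p r)⁻¹

lemma rotAct_zero (σ : Perm (ZMod p)) : rotAct p 0 σ = σ := by
  simp [rotAct, rot_zero]

lemma rotAct_inv (r : ZMod p) (σ : Perm (ZMod p)) :
    (rotAct p r σ)⁻¹ = rotAct p r σ⁻¹ := by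
  simp [rotAct, mul_inv_rev, mul_assoc]

lemma rotAct_rotAct (r s : ZMod p) (σ : Perm (ZMod p)) :
    rotAct p r (rotAct p s σ) = rotAct p (r + s) σ := by
  simp [rotAct, rot_add, mul_inv_rev, mul_assoc]

lemma rotAct_neg_cancel (r : ZMod p) (σ : Perm (ZMod p)) :
    rotAct p (-r) (rotAct p r σ) = σ := by
  rw [rotAct_rotAct, neg_add_cancel, rotAct_zero]

/-- Setoid identifying a directed cycle with its reversal: undirected cycles. -/
def revSetoid : Setoid (HC p) where
  r σ τ := τ.1 = σ.1 ∨ τ.1 = σ.1⁻¹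
  iseqv := by
    constructor
    · exact fun a => Or.inl rfl
    · rintro a b (h | h)
      · exact Or.inl h.symm
      · right; rw [h, inv_inv]
    · rintro a b c (h1 | h1) (h2 | h2) <;> rw [h2, h1] <;> simp
/-- Undirected Hamiltonian cycles. -/
def UCyc := Quotient (revSetoid p)

/-- Setoid identifying cycles up to rotation and reversal: the equivalence classes
of undirected cycles under rotation. -/
def rotSetoid : Setoid (HC p) where
  r σ τ := ∃ r : ZMod p, τ.1 = rotAct p r σ.1 ∨ τ.1 = (rotAct p r σ.1)⁻¹
  iseqv := by
    constructor
    · exact fun a => ⟨0, Or.inl (by rw [rotAct_zero])⟩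
    · rintro a b ⟨r, h | h⟩ <;> refine ⟨-r, ?_⟩
      · left; rw [h, rotAct_neg_cancel]
      · right; rw [h, rotAct_inv, inv_inv, rotAct_neg_cancel]
    · rintro a b c ⟨r, h1 | h1⟩ ⟨s, h2 | h2⟩ <;> refine ⟨s + r, ?_⟩ <;>
        rw [h2, h1] <;>
        simp [rotAct_inv, rotAct_rotAct]
/-- Rotation classes of undirected Hamiltonian cycles. -/
def RotClasses := Quotient (rotSetoid p)

/-- every undirected Hamiltonian cycle on `ZMod p` invariant under a
nontrivial rotation is a star polygon `0, d, 2d, …` for some `1 ≤ d ≤ (p-1)/2`. -/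

lemma key_trans (p : ℕ) [Fact p.Prime] (σ : HC p) (s : ZMod p) (hs : s ≠ 0)
    (h : rot p s * σ.1 * (rot p s)⁻¹ = σ.1) :
    ∀ x, σ.1 x = σ.1 0 + x := by
  have hstep : ∀ x : ZMod p, σ.1 (x + s) = σ.1 x + s := by
    intro x
    have := DFunLike.congr_fun h (x + s)
    simp only [rot, Perm.mul_apply] at this
    simp only [Equiv.Perm.inv_def, Equiv.symm_apply_apply] at this
    simpa [Equiv.addLeft, add_comm, eq_comm] using this
  have hn : ∀ n : ℕ, σ.1 ((n : ZMod p) * s) = σ.1 0 + (n : ZMod p) * s := by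
    intro n
    induction n with
    | zero => simp
    | succ n ih =>
      push_cast
      rw [add_mul, one_mul, ← add_assoc, hstep, ih, add_assoc]
  intro x
  have hx : ((x * s⁻¹).val : ZMod p) * s = x := by
    rw [ZMod.natCast_val, ZMod.cast_id, mul_assoc, inv_mul_cancel₀ hs, mul_one]
  have := hn (x * s⁻¹).val
  rwa [hx] at this

theorem stmt10 (p : ℕ) [Fact p.Prime] (hp : 5 ≤ p) (σ : HC p) (r : ZMod p) (hr : r ≠ 0)
    (h : FixedBy p (rot p r) σ.1) :
    ∃ d : ℕ, 1 ≤ d ∧ d ≤ (p - 1) / 2 ∧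
      (σ.1 = Equiv.addLeft (d : ZMod p) ∨ σ.1 = (Equiv.addLeft (d : ZMod p))⁻¹) := by
  have hp2 : (2 : ZMod p) ≠ 0 := by
    intro h2
    have : (p : ℕ) ∣ 2 := by
      have := (ZMod.natCast_eq_zero_iff 2 p).mp (by exact_mod_cast h2)
      exact this
    have := Nat.le_of_dvd (by norm_num) this
    omega
  -- get a nonzero s with rot s * σ * (rot s)⁻¹ = σ
  have hkey : ∀ x, σ.1 x = σ.1 0 + x := by
    rcases h with h1 | h1
    · exact key_trans p σ r hr h1
    · have hinv : rot p r * σ.1⁻¹ * (rot p r)⁻¹ = σ.1 := by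
        have := congrArg (·⁻¹) h1
        simpa [mul_inv_rev, mul_assoc] using this
      have h2 : rot p (r + r) * σ.1 * (rot p (r + r))⁻¹ = σ.1 := by
        rw [rot_add]
        calc rot p r * rot p r * σ.1 * (rot p r * rot p r)⁻¹
            = rot p r * (rot p r * σ.1 * (rot p r)⁻¹) * (rot p r)⁻¹ := by
              simp [mul_inv_rev, mul_assoc]
          _ = rot p r * σ.1⁻¹ * (rot p r)⁻¹ := by rw [h1]
          _ = σ.1 := hinv
      have hrr : r + r ≠ 0 := by
        intro hz
        apply hr
        have : (2 : ZMod p) * r = 0 := by ring_nf; linear_combination hz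
        rcases mul_eq_zero.mp this with h' | h'
        · exact absurd h' hp2
        · exact h'
      exact key_trans p σ (r + r) hrr h2
  set a : ZMod p := σ.1 0 with ha
  have ha0 : a ≠ 0 := by
    intro hz
    have hone : σ.1 = 1 := by
      ext x; simp [hkey x, ← ha, hz]
    exact σ.2.1.ne_one hone
  have hσ : σ.1 = Equiv.addLeft a := by
    ext x; simp [hkey x, ← ha, Equiv.addLeft]
  have hval : a.val < p := a.val_lt
  have hval1 : 1 ≤ a.val := by
    rcases Nat.eq_zero_or_pos a.val with h0 | h0
    · exact absurd (by rwa [ZMod.val_eq_zero] at h0) ha0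
    · exact h0
  have hodd : p % 2 = 1 := by
    have := (Fact.out : p.Prime)
    rcases this.eq_one_or_self_of_dvd 2 with _
    have h2 : p ≠ 2 := by omega
    have := Nat.Prime.odd_of_ne_two (Fact.out) h2
    omega
  have hcast : ((a.val : ℕ) : ZMod p) = a := by
    rw [ZMod.natCast_val, ZMod.cast_id]
  by_cases hle : a.val ≤ (p - 1) / 2
  · exact ⟨a.val, hval1, hle, Or.inl (by rw [hσ, hcast])⟩
  · refine ⟨p - a.val, by omega, by omega, Or.inr ?_⟩
    have hc : ((p - a.val : ℕ) : ZMod p) = -a := by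
      have h1 : ((p - a.val : ℕ) : ZMod p) + (a.val : ZMod p) = 0 := by
        rw [← Nat.cast_add, Nat.sub_add_cancel hval.le, ZMod.natCast_self]
      rw [hcast] at h1
      exact eq_neg_of_add_eq_zero_left h1
    rw [hσ, hc]
    ext x; simp [Equiv.Perm.inv_def]
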